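/- arXiv:1806.00091 — 6 statements merged into one kernel-verified Lean document; each statement's English description precedes it below -/
import Mathlib

section
/- The operator P defined by Pf(m) = ∫₀^{λ(m)} λ'(m) Q'(λ(m)) e^{Q(y)-Q(λ(m))} f(y) dy is a stochastic operator on L¹[0,∞): for every density f (f ≥ 0, ∫f = 1), Pf ≥ 0 and ∫₀^∞ Pf(m) dm = 1. -/
open MeasureTheory Real Set Filter

open Topology

private lemma keyInt {Q Qd lam lamd : ℝ → ℝ}
    (hQ : ∀ m, HasDerivAt Q (Qd m) m) (hQd : ∀ m, 0 ≤ Qd m)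
    (hlam : ∀ m, HasDerivAt lam (lamd m) m) (hlamd : ∀ m, 0 < lamd m)
    (hQtop : Tendsto Q atTop atTop) (hlamtop : Tendsto lam atTop atTop)
    (y m0 : ℝ) (hQeq : Q (lam m0) = Q y) :
    IntegrableOn (fun m => lamd m * Qd (lam m) * Real.exp (Q y - Q (lam m))) (Ioi m0) ∧
    ∫ m in Ioi m0, lamd m * Qd (lam m) * Real.exp (Q y - Q (lam m)) = 1 := by
  have hg : ∀ m : ℝ, HasDerivAt (fun m => -Real.exp (Q y - Q (lam m)))
      (lamd m * Qd (lam m) * Real.exp (Q y - Q (lam m))) m := by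
    intro m
    have h1 : HasDerivAt (fun m => Q (lam m)) (Qd (lam m) * lamd m) m :=
      (hQ (lam m)).comp m (hlam m)
    have h2 : HasDerivAt (fun m => Q y - Q (lam m)) (-(Qd (lam m) * lamd m)) m :=
      h1.const_sub (Q y)
    have h3 := (Real.hasDerivAt_exp (Q y - Q (lam m))).comp m h2
    have h4 := h3.neg
    refine h4.congr_deriv ?_
    ring
  have htop : Tendsto (fun m => -Real.exp (Q y - Q (lam m))) atTop (𝓝 0) := by
    rw [show (0:ℝ) = -0 by ring]
    apply Filter.Tendsto.neg
    apply Real.tendsto_exp_atBot.comp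
    simp only [sub_eq_add_neg]
    apply Filter.tendsto_atBot_add_const_left
    exact tendsto_neg_atTop_atBot.comp (hQtop.comp hlamtop)
  have hpos : ∀ m ∈ Ioi m0, 0 ≤ lamd m * Qd (lam m) * Real.exp (Q y - Q (lam m)) :=
    fun m _ => mul_nonneg (mul_nonneg (hlamd m).le (hQd _)) (Real.exp_pos _).le
  have hcont : ContinuousWithinAt (fun m => -Real.exp (Q y - Q (lam m))) (Ici m0) m0 :=
    (hg m0).continuousAt.continuousWithinAt
  refine ⟨integrableOn_Ioi_deriv_of_nonneg hcont (fun x _ => hg x) hpos htop, ?_⟩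
  rw [integral_Ioi_of_hasDerivAt_of_nonneg hcont (fun x _ => hg x) hpos htop]
  rw [hQeq, sub_self, Real.exp_zero]
  ring

/-- Pf(m) = ∫₀^{λ(m)} λ'(m) Q'(λ(m)) e^{Q(y)-Q(λ(m))} f(y) dy
is a stochastic operator on L¹[0,∞): for every density f, Pf ≥ 0 and ∫₀^∞ Pf = 1. -/
theorem stmt4 (m_P : ℝ) (hmP : 0 < m_P) (Q Qd lam lamd : ℝ → ℝ)
    (hQ : ∀ m, HasDerivAt Q (Qd m) m) (hQ0 : ∀ m, m ≤ m_P → Q m = 0)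
    (hQmono : StrictMonoOn Q (Ici m_P)) (hQtop : Tendsto Q atTop atTop)
    (hQnn : ∀ m, 0 ≤ Q m) (hQd : ∀ m, 0 ≤ Qd m)
    (hlam : ∀ m, HasDerivAt lam (lamd m) m) (hlamd : ∀ m, 0 < lamd m)
    (hlam0 : lam 0 = m_P) (hlamtop : Tendsto lam atTop atTop)
    (f : ℝ → ℝ) (hf0 : ∀ y, 0 ≤ f y) (hfi : IntegrableOn f (Ioi 0))
    (hf1 : ∫ y in Ioi (0:ℝ), f y = 1) :
    (∀ m, 0 ≤ lamd m * Qd (lam m) *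
        ∫ y in (0:ℝ)..lam m, Real.exp (Q y - Q (lam m)) * f y) ∧
    ∫ m in Ioi (0:ℝ), (lamd m * Qd (lam m) *
        ∫ y in (0:ℝ)..lam m, Real.exp (Q y - Q (lam m)) * f y) = 1 := by
  -- basic facts
  have hQdiff : Differentiable ℝ Q := fun x => (hQ x).differentiableAt
  have hQcont : Continuous Q := hQdiff.continuous
  have hQderiv : deriv Q = Qd := funext fun x => (hQ x).deriv
  have hQmono' : Monotone Q := by
    apply monotone_of_deriv_nonneg hQdiff
    intro x; rw [hQderiv]; exact hQd x
  have hlamdiff : Differentiable ℝ lam := fun x => (hlam x).differentiableAt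
  have hlamcont : Continuous lam := hlamdiff.continuous
  have hlamderiv : deriv lam = lamd := funext fun x => (hlam x).deriv
  have hlamSM : StrictMono lam := by
    apply strictMono_of_deriv_pos
    intro x; rw [hlamderiv]; exact hlamd x
  have hQdzero : ∀ x, x < m_P → Qd x = 0 := by
    intro x hx
    have hev : Q =ᶠ[𝓝 x] fun _ => (0:ℝ) := by
      filter_upwards [Iio_mem_nhds hx] with z hz
      exact hQ0 z (le_of_lt hz)
    have h0 : HasDerivAt Q 0 x :=
      (hasDerivAt_const x (0:ℝ)).congr_of_eventuallyEq hev
    exact (hQ x).unique h0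
  -- Part 1: nonnegativity
  have part1 : ∀ m, 0 ≤ lamd m * Qd (lam m) *
      ∫ y in (0:ℝ)..lam m, Real.exp (Q y - Q (lam m)) * f y := by
    intro m
    rcases lt_or_ge m 0 with hm | hm
    · have hlt : lam m < m_P := by rw [← hlam0]; exact hlamSM hm
      rw [hQdzero _ hlt, mul_zero, zero_mul]
    · have h0 : (0:ℝ) ≤ lam m := by
        have : m_P ≤ lam m := by rw [← hlam0]; exact hlamSM.monotone hm
        linarith
      have hint : 0 ≤ ∫ y in (0:ℝ)..lam m, Real.exp (Q y - Q (lam m)) * f y :=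
        intervalIntegral.integral_nonneg h0
          (fun u _ => mul_nonneg (Real.exp_pos _).le (hf0 u))
      exact mul_nonneg (mul_nonneg (hlamd m).le (hQd _)) hint
  refine ⟨part1, ?_⟩
  -- notation
  set μ := volume.restrict (Ioi (0:ℝ)) with hμdef
  set c : ℝ → ℝ → ℝ := fun m y => lamd m * Qd (lam m) * Real.exp (Q y - Q (lam m)) with hc
  set F : ℝ → ℝ → ℝ := fun m y => (Iic (lam m)).indicator (fun y' => c m y' * f y') y with hFdef
  have hFnn : ∀ m y, 0 ≤ F m y := by
    intro m y
    apply Set.indicator_nonneg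
    intro y' _
    exact mul_nonneg (mul_nonneg (mul_nonneg (hlamd m).le (hQd _)) (Real.exp_pos _).le) (hf0 y')
  -- pointwise identity P m = ∫ F m dμ for m > 0
  have hPF : ∀ m, 0 < m → (lamd m * Qd (lam m) *
      ∫ y in (0:ℝ)..lam m, Real.exp (Q y - Q (lam m)) * f y) = ∫ y, F m y ∂μ := by
    intro m hm
    have hL : 0 < lam m := by
      have : m_P < lam m := by rw [← hlam0]; exact hlamSM hm
      linarith
    have h1 : ∫ y, F m y ∂μ = ∫ y in Iic (lam m) ∩ Ioi 0, c m y * f y := by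
      rw [hμdef]
      rw [integral_indicator measurableSet_Iic, Measure.restrict_restrict measurableSet_Iic]
    rw [h1, Set.inter_comm, Set.Ioi_inter_Iic]
    rw [intervalIntegral.integral_of_le hL.le]
    rw [← MeasureTheory.integral_const_mul]
    apply integral_congr_ae
    apply ae_of_all
    intro y
    simp only [hc]
    ring
  -- measurability of the kernel
  have hQdmeas : Measurable Qd := by rw [← hQderiv]; exact measurable_deriv Q
  have hlamdmeas : Measurable lamd := by rw [← hlamderiv]; exact measurable_deriv lam
  have hcmeas : Measurable (fun p : ℝ × ℝ => c p.1 p.2) := by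
    apply Measurable.mul
    · exact (hlamdmeas.comp measurable_fst).mul
        (hQdmeas.comp (hlamcont.measurable.comp measurable_fst))
    · exact ((hQcont.measurable.comp measurable_snd).sub
        (hQcont.measurable.comp (hlamcont.measurable.comp measurable_fst))).exp
  obtain ⟨g, hgsm, hgae⟩ := hfi.aestronglyMeasurable
  have hfprod : (fun p : ℝ × ℝ => f p.2) =ᵐ[μ.prod μ] (fun p => g p.2) := by
    have hsub : {p : ℝ × ℝ | f p.2 ≠ g p.2} ⊆ (univ : Set ℝ) ×ˢ {y | f y ≠ g y} := by
      intro p hp; exact ⟨trivial, hp⟩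
    have : (μ.prod μ) ((univ : Set ℝ) ×ˢ {y | f y ≠ g y}) = 0 := by
      rw [Measure.prod_prod]
      have hN : μ {y | f y ≠ g y} = 0 := hgae
      rw [hN, mul_zero]
    exact measure_mono_null hsub this
  have hf2aesm : AEStronglyMeasurable (fun p : ℝ × ℝ => f p.2) (μ.prod μ) :=
    ⟨fun p => g p.2, hgsm.comp_measurable measurable_snd, hfprod⟩
  have hTmeas : MeasurableSet {p : ℝ × ℝ | p.2 ≤ lam p.1} :=
    measurableSet_le measurable_snd (hlamcont.measurable.comp measurable_fst)
  have hFeq : (fun p : ℝ × ℝ => F p.1 p.2) =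
      Set.indicator {p : ℝ × ℝ | p.2 ≤ lam p.1} (fun p => c p.1 p.2 * f p.2) := by
    ext p
    by_cases h : p.2 ≤ lam p.1
    · simp only [hFdef]
      rw [Set.indicator_of_mem (Set.mem_Iic.mpr h),
        Set.indicator_of_mem (show p ∈ {p : ℝ × ℝ | p.2 ≤ lam p.1} from h)]
    · simp only [hFdef]
      rw [Set.indicator_of_notMem (fun hh => h (Set.mem_Iic.mp hh)),
        Set.indicator_of_notMem (show p ∉ {p : ℝ × ℝ | p.2 ≤ lam p.1} from h)]
  have hFaesm : AEStronglyMeasurable (fun p : ℝ × ℝ => F p.1 p.2) (μ.prod μ) := by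
    rw [hFeq]
    exact (hcmeas.aestronglyMeasurable.mul hf2aesm).indicator hTmeas
  -- integrability of F m · for m > 0
  have hFint : ∀ m, 0 < m → Integrable (fun y => F m y) μ := by
    intro m hm
    have hB : Integrable (fun y => (lamd m * Qd (lam m)) * f y) μ :=
      hfi.const_mul _
    apply Integrable.mono' hB
    · apply AEStronglyMeasurable.indicator _ measurableSet_Iic
      apply AEStronglyMeasurable.mul _ hfi.aestronglyMeasurable
      exact (continuous_const.mul ((hQcont.sub continuous_const).rexp)).aestronglyMeasurable
    · apply ae_of_all
      intro y
      rw [Real.norm_of_nonneg (hFnn m y)]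
      by_cases h : y ∈ Iic (lam m)
      · rw [hFdef]
        simp only [Set.indicator_of_mem h]
        have hexp : Real.exp (Q y - Q (lam m)) ≤ 1 := by
          rw [Real.exp_le_one_iff]
          have : Q y ≤ Q (lam m) := hQmono' (Set.mem_Iic.mp h)
          linarith
        have : c m y ≤ lamd m * Qd (lam m) := by
          rw [hc]
          calc lamd m * Qd (lam m) * Real.exp (Q y - Q (lam m))
              ≤ lamd m * Qd (lam m) * 1 := by
                apply mul_le_mul_of_nonneg_left hexp
                exact mul_nonneg (hlamd m).le (hQd _)
            _ = lamd m * Qd (lam m) := mul_one _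
        exact mul_le_mul_of_nonneg_right this (hf0 y)
      · rw [hFdef]
        simp only [Set.indicator_of_notMem h]
        exact mul_nonneg (mul_nonneg (hlamd m).le (hQd _)) (hf0 y)
  -- existence of switching point m0
  have hm0ex : ∀ y, 0 < y → ∃ m0 : ℝ, 0 ≤ m0 ∧ Q (lam m0) = Q y ∧
      ({m : ℝ | y ≤ lam m} ∩ Ioi 0 : Set ℝ) =ᵐ[volume] Ioi m0 := by
    intro y hy
    rcases le_or_gt y m_P with hyP | hyP
    · refine ⟨0, le_refl _, ?_, ?_⟩
      · rw [hlam0, hQ0 _ (le_refl _), hQ0 _ hyP]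
      · have : ({m : ℝ | y ≤ lam m} ∩ Ioi 0 : Set ℝ) = Ioi 0 := by
          apply Set.inter_eq_self_of_subset_right
          intro m hm
          have : m_P < lam m := by rw [← hlam0]; exact hlamSM hm
          exact le_of_lt (lt_of_le_of_lt hyP this)
        rw [this]
        exact EventuallyEq.rfl
    · obtain ⟨M, hM⟩ := (hlamtop.eventually (eventually_gt_atTop y)).exists
      have hM0 : (0:ℝ) ≤ M := by
        by_contra h
        push_neg at h
        have : lam M < m_P := by rw [← hlam0]; exact hlamSM h
        linarith
      have hyIcc : y ∈ Icc (lam 0) (lam M) := by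
        constructor
        · rw [hlam0]; exact hyP.le
        · exact hM.le
      obtain ⟨m0, hm0mem, hm0val⟩ := intermediate_value_Icc hM0 hlamcont.continuousOn hyIcc
      have hm0pos : 0 < m0 := by
        by_contra h
        push_neg at h
        have : lam m0 ≤ m_P := by rw [← hlam0]; exact hlamSM.monotone h
        rw [hm0val] at this
        linarith
      refine ⟨m0, hm0pos.le, by rw [hm0val], ?_⟩
      have hset : ({m : ℝ | y ≤ lam m} ∩ Ioi 0 : Set ℝ) = Ici m0 := by
        ext m
        simp only [Set.mem_inter_iff, Set.mem_setOf_eq, Set.mem_Ioi, Set.mem_Ici]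
        constructor
        · rintro ⟨h1, _⟩
          rw [← hm0val] at h1
          exact hlamSM.le_iff_le.mp h1
        · intro h
          refine ⟨?_, lt_of_lt_of_le hm0pos h⟩
          rw [← hm0val]
          exact hlamSM.monotone h
      rw [hset]
      exact (Ioi_ae_eq_Ici).symm
  -- inner lintegral
  have hSmeas : ∀ y : ℝ, MeasurableSet {m : ℝ | y ≤ lam m} :=
    fun y => measurableSet_le measurable_const hlamcont.measurable
  have inner : ∀ y, 0 < y → ∫⁻ m, ENNReal.ofReal (F m y) ∂μ = ENNReal.ofReal (f y) := by
    intro y hy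
    obtain ⟨m0, hm00, hQeq, hae⟩ := hm0ex y hy
    obtain ⟨hint, hval⟩ := keyInt hQ hQd hlam hlamd hQtop hlamtop y m0 hQeq
    have hFy : ∀ m, ENNReal.ofReal (F m y) =
        ({m : ℝ | y ≤ lam m} : Set ℝ).indicator (fun m => ENNReal.ofReal (c m y * f y)) m := by
      intro m
      by_cases h : y ≤ lam m
      · rw [hFdef]
        simp only [Set.indicator_of_mem (Set.mem_Iic.mpr h),
          Set.indicator_of_mem (show m ∈ {m : ℝ | y ≤ lam m} from h)]
      · rw [hFdef]
        simp only [Set.indicator_of_notMem (fun hh => h (Set.mem_Iic.mp hh)),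
          Set.indicator_of_notMem (show m ∉ {m : ℝ | y ≤ lam m} from h), ENNReal.ofReal_zero]
    simp_rw [hFy]
    rw [hμdef, lintegral_indicator (hSmeas y), Measure.restrict_restrict (hSmeas y)]
    rw [setLIntegral_congr hae]
    have hmul : ∀ m, ENNReal.ofReal (c m y * f y) =
        ENNReal.ofReal (f y) * ENNReal.ofReal (c m y) := by
      intro m
      rw [mul_comm (c m y) (f y), ENNReal.ofReal_mul (hf0 y)]
    simp_rw [hmul]
    rw [lintegral_const_mul' _ _ ENNReal.ofReal_ne_top]
    have : ∫⁻ m in Ioi m0, ENNReal.ofReal (c m y) = ENNReal.ofReal 1 := by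
      rw [← hval]
      rw [← ofReal_integral_eq_lintegral_ofReal hint]
      apply ae_of_all
      intro m
      exact mul_nonneg (mul_nonneg (hlamd m).le (hQd _)) (Real.exp_pos _).le
    rw [this, ENNReal.ofReal_one, mul_one]
  -- main chain
  have hPFae : (fun m => lamd m * Qd (lam m) *
      ∫ y in (0:ℝ)..lam m, Real.exp (Q y - Q (lam m)) * f y) =ᵐ[μ]
      (fun m => ∫ y, F m y ∂μ) := by
    filter_upwards [ae_restrict_mem measurableSet_Ioi] with m hm
    exact hPF m hm
  have hPnn : 0 ≤ᵐ[μ] (fun m => lamd m * Qd (lam m) *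
      ∫ y in (0:ℝ)..lam m, Real.exp (Q y - Q (lam m)) * f y) :=
    ae_of_all _ part1
  have hPaesm : AEStronglyMeasurable (fun m => lamd m * Qd (lam m) *
      ∫ y in (0:ℝ)..lam m, Real.exp (Q y - Q (lam m)) * f y) μ :=
    (hFaesm.integral_prod_right').congr hPFae.symm
  rw [integral_eq_lintegral_of_nonneg_ae hPnn hPaesm]
  have hmain : ∫⁻ m, ENNReal.ofReal (lamd m * Qd (lam m) *
      ∫ y in (0:ℝ)..lam m, Real.exp (Q y - Q (lam m)) * f y) ∂μ = 1 := by
    calc ∫⁻ m, ENNReal.ofReal (lamd m * Qd (lam m) *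
        ∫ y in (0:ℝ)..lam m, Real.exp (Q y - Q (lam m)) * f y) ∂μ
        = ∫⁻ m, (∫⁻ y, ENNReal.ofReal (F m y) ∂μ) ∂μ := by
          apply lintegral_congr_ae
          filter_upwards [ae_restrict_mem measurableSet_Ioi] with m hm
          rw [hPF m hm]
          exact ofReal_integral_eq_lintegral_ofReal (hFint m hm) (ae_of_all _ (hFnn m))
      _ = ∫⁻ y, (∫⁻ m, ENNReal.ofReal (F m y) ∂μ) ∂μ := by
          apply lintegral_lintegral_swap
          exact hFaesm.aemeasurable.ennreal_ofReal
      _ = ∫⁻ y, ENNReal.ofReal (f y) ∂μ := by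
          apply lintegral_congr_ae
          filter_upwards [ae_restrict_mem measurableSet_Ioi] with y hy
          exact inner y hy
      _ = ENNReal.ofReal (∫ y, f y ∂μ) :=
          (ofReal_integral_eq_lintegral_ofReal hfi (ae_of_all _ hf0)).symm
      _ = 1 := by rw [hμdef] at *; rw [hf1]; exact ENNReal.ofReal_one
  rw [hmain]
  simp
end

section
/- If f is a density on [0,∞) and m̄ > 0 satisfies ∫₀^{λ(m̄)} f(y) dy > 0, then Pf(m) > 0 for almost every m ≥ m̄, where Pf(m) = ∫₀^{λ(m)} λ'(m)Q'(λ(m)) e^{Q(y)-Q(λ(m))} f(y) dy. -/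
open MeasureTheory Real Set Filter

/-- if f is a density on [0,∞) and m̄ > 0 satisfies
∫₀^{λ(m̄)} f > 0, then Pf(m) > 0 for almost every m ≥ m̄. -/
theorem stmt6 (m_P : ℝ) (hmP : 0 < m_P) (Q Qd lam lamd : ℝ → ℝ)
    (hlammono : StrictMono lam) (hlam0 : lam 0 = m_P)
    (hlamd : ∀ m, 0 < lamd m) (hlamtop : Tendsto lam atTop atTop)
    (hQd : ∀ m, 0 < m → 0 < Qd (lam m)) (hQmono : Monotone Q)
    (f : ℝ → ℝ) (hf0 : ∀ y, 0 ≤ f y) (hfi : IntegrableOn f (Ioi 0))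
    (hf1 : ∫ y in Ioi (0:ℝ), f y = 1)
    (mbar : ℝ) (hmbar : 0 < mbar)
    (hpos : 0 < ∫ y in (0:ℝ)..lam mbar, f y) :
    ∀ᵐ m ∂(volume : Measure ℝ), mbar ≤ m →
      0 < lamd m * Qd (lam m) *
        ∫ y in (0:ℝ)..lam m, Real.exp (Q y - Q (lam m)) * f y := by
  filter_upwards with m hm
  have hm0 : 0 < m := lt_of_lt_of_le hmbar hm
  have hL0 : 0 < lam m := lt_of_le_of_lt hmP.le (hlam0 ▸ hlammono hm0)
  have hLb0 : 0 < lam mbar := lt_of_le_of_lt hmP.le (hlam0 ▸ hlammono hmbar)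
  have hLbL : lam mbar ≤ lam m := hlammono.monotone hm
  have hQm : Measurable Q := hQmono.measurable
  set c := Real.exp (Q 0 - Q (lam m)) with hc
  have hcpos : 0 < c := Real.exp_pos _
  have hfI : IntegrableOn f (Ioc 0 (lam m)) := hfi.mono_set Ioc_subset_Ioi_self
  have hgmeas : AEStronglyMeasurable (fun y => Real.exp (Q y - Q (lam m)) * f y)
      (volume.restrict (Ioc 0 (lam m))) :=
    (((hQm.sub measurable_const).exp).aestronglyMeasurable).mul hfI.aestronglyMeasurable
  have hgI : IntegrableOn (fun y => Real.exp (Q y - Q (lam m)) * f y) (Ioc 0 (lam m)) := by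
    refine Integrable.mono' hfI hgmeas ?_
    filter_upwards [ae_restrict_mem measurableSet_Ioc] with y hy
    rw [norm_mul, Real.norm_of_nonneg (hf0 y), Real.norm_of_nonneg (Real.exp_pos _).le]
    -- replaced abs
    --rw [abs_mul, abs_of_nonneg (hf0 y), abs_of_pos (Real.exp_pos _)]
    have he : Real.exp (Q y - Q (lam m)) ≤ 1 := by
      rw [Real.exp_le_one_iff]
      linarith [hQmono hy.2]
    nlinarith [hf0 y]
  have hcf : IntegrableOn (fun y => c * f y) (Ioc 0 (lam m)) := hfI.const_mul c
  have hmono : ∫ y in Ioc 0 (lam m), c * f y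
      ≤ ∫ y in Ioc 0 (lam m), Real.exp (Q y - Q (lam m)) * f y := by
    refine setIntegral_mono_on hcf hgI measurableSet_Ioc ?_
    intro y hy
    have h1 : c ≤ Real.exp (Q y - Q (lam m)) := by
      apply Real.exp_le_exp.mpr
      linarith [hQmono hy.1.le]
    exact mul_le_mul_of_nonneg_right h1 (hf0 y)
  have hsubset : ∫ y in Ioc 0 (lam mbar), f y ≤ ∫ y in Ioc 0 (lam m), f y := by
    refine setIntegral_mono_set hfI (Eventually.of_forall hf0) ?_
    exact HasSubset.Subset.eventuallyLE (Ioc_subset_Ioc_right hLbL)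
  have hp : 0 < ∫ y in Ioc 0 (lam mbar), f y := by
    rwa [intervalIntegral.integral_of_le hLb0.le] at hpos
  have hpI : 0 < ∫ y in (0:ℝ)..lam m, Real.exp (Q y - Q (lam m)) * f y := by
    rw [intervalIntegral.integral_of_le hL0.le]
    calc (0:ℝ) < c * ∫ y in Ioc 0 (lam mbar), f y := mul_pos hcpos hp
      _ ≤ c * ∫ y in Ioc 0 (lam m), f y := mul_le_mul_of_nonneg_left hsubset hcpos.le
      _ = ∫ y in Ioc 0 (lam m), c * f y := (MeasureTheory.integral_const_mul c f).symm
      _ ≤ _ := hmono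
  exact mul_pos (mul_pos (hlamd m) (hQd m hm0)) hpI
end

section
/- For any two densities f, g on [0,∞), there exists α > 0 such that Pf(m) > 0 and Pg(m) > 0 for almost every m ≥ α; in particular P overlaps supports: the supports of Pf and Pg intersect in a set of positive Lebesgue measure. -/
open MeasureTheory Real Set Filter

/-- The cell cycle operator Pf(m) = λ'(m) Q'(λ(m)) ∫₀^{λ(m)} e^{Q(y)-Q(λ(m))} f(y) dy. -/
noncomputable def cellOp (Q Qd lam lamd : ℝ → ℝ) (f : ℝ → ℝ) : ℝ → ℝ :=
  fun m => lamd m * Qd (lam m) * ∫ y in (0:ℝ)..lam m, Real.exp (Q y - Q (lam m)) * f y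

lemma exists_R (f : ℝ → ℝ) (hf0 : ∀ y, 0 ≤ f y) (hfi : IntegrableOn f (Ioi 0))
    (hf1 : ∫ y in Ioi (0:ℝ), f y = 1) :
    ∃ n : ℕ, 0 < volume (Function.support f ∩ Ioc 0 (n:ℝ)) := by
  have hpos : 0 < ∫ y in Ioi (0:ℝ), f y := by rw [hf1]; norm_num
  have hsup : 0 < volume (Function.support f ∩ Ioi 0) :=
    (setIntegral_pos_iff_support_of_nonneg_ae
      (Filter.Eventually.of_forall hf0) hfi).mp hpos
  by_contra h
  push_neg at h
  have hnull : ∀ n : ℕ, volume (Function.support f ∩ Ioc 0 (n:ℝ)) = 0 := by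
    intro n; exact le_antisymm (h n) zero_le
  have hsub : Function.support f ∩ Ioi 0 ⊆
      ⋃ n : ℕ, Function.support f ∩ Ioc 0 (n:ℝ) := by
    rintro x ⟨hx1, hx2⟩
    obtain ⟨n, hn⟩ := exists_nat_ge x
    exact mem_iUnion.mpr ⟨n, hx1, hx2, hn⟩
  have : volume (Function.support f ∩ Ioi 0) = 0 :=
    measure_mono_null hsub (measure_iUnion_null hnull)
  simp [this] at hsup

lemma key (Q : ℝ → ℝ) (hQmono : Monotone Q) (f : ℝ → ℝ) (hf0 : ∀ y, 0 ≤ f y)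
    (hfi : IntegrableOn f (Ioi 0)) (R t : ℝ)
    (hR : 0 < volume (Function.support f ∩ Ioc 0 R)) (hRt : R ≤ t) (ht : 0 < t) :
    0 < ∫ y in (0:ℝ)..t, Real.exp (Q y - Q t) * f y := by
  rw [intervalIntegral.integral_of_le ht.le]
  have hQm : Measurable Q := hQmono.measurable
  have hw : Measurable fun y => Real.exp (Q y - Q t) :=
    Real.measurable_exp.comp (hQm.sub measurable_const)
  have hint : IntegrableOn (fun y => Real.exp (Q y - Q t) * f y) (Ioc 0 t) := by
    apply Integrable.bdd_mul (c := 1)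
      (hfi.mono_set Ioc_subset_Ioi_self)
      (hw.aestronglyMeasurable.restrict)
    filter_upwards [ae_restrict_mem measurableSet_Ioc] with y hy
    rw [Real.norm_eq_abs, abs_of_pos (Real.exp_pos _)]
    exact Real.exp_le_one_iff.mpr (sub_nonpos.mpr (hQmono hy.2))
  apply (setIntegral_pos_iff_support_of_nonneg_ae
    (Filter.Eventually.of_forall fun y => mul_nonneg (Real.exp_pos _).le (hf0 y))
    hint).mpr
  have hseq : Function.support (fun y => Real.exp (Q y - Q t) * f y)
      = Function.support f := by
    ext y
    simp [Function.mem_support, (Real.exp_pos (Q y - Q t)).ne']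
  rw [hseq]
  exact lt_of_lt_of_le hR (measure_mono (inter_subset_inter le_rfl
    (Ioc_subset_Ioc_right hRt)))

/-- for any two densities f, g on [0,∞) there is α > 0 with
Pf(m) > 0 and Pg(m) > 0 for a.e. m ≥ α; in particular P overlaps supports:
the supports of Pf and Pg intersect in a set of positive Lebesgue measure. -/
theorem stmt7 (m_P : ℝ) (hmP : 0 < m_P) (Q Qd lam lamd : ℝ → ℝ)
    (hlammono : StrictMono lam) (hlam0 : lam 0 = m_P)
    (hlamd : ∀ m, 0 < lamd m) (hlamtop : Tendsto lam atTop atTop)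
    (hQd : ∀ m, 0 < m → 0 < Qd (lam m)) (hQmono : Monotone Q)
    (f g : ℝ → ℝ)
    (hf0 : ∀ y, 0 ≤ f y) (hfi : IntegrableOn f (Ioi 0))
    (hf1 : ∫ y in Ioi (0:ℝ), f y = 1)
    (hg0 : ∀ y, 0 ≤ g y) (hgi : IntegrableOn g (Ioi 0))
    (hg1 : ∫ y in Ioi (0:ℝ), g y = 1) :
    ∃ α : ℝ, 0 < α ∧
      (∀ᵐ m ∂(volume : Measure ℝ), α ≤ m →
        0 < cellOp Q Qd lam lamd f m ∧ 0 < cellOp Q Qd lam lamd g m) ∧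
      0 < volume (Function.support (cellOp Q Qd lam lamd f) ∩
        Function.support (cellOp Q Qd lam lamd g)) := by
  obtain ⟨nf, hnf⟩ := exists_R f hf0 hfi hf1
  obtain ⟨ng, hng⟩ := exists_R g hg0 hgi hg1
  set R : ℝ := max (nf : ℝ) (ng : ℝ) with hRdef
  obtain ⟨α₀, hα₀⟩ := (hlamtop.eventually_ge_atTop R).exists_forall_of_atTop
  have hnf' : 0 < volume (Function.support f ∩ Ioc 0 R) :=
    lt_of_lt_of_le hnf (measure_mono (inter_subset_inter le_rfl
      (Ioc_subset_Ioc_right (le_max_left _ _))))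
  have hng' : 0 < volume (Function.support g ∩ Ioc 0 R) :=
    lt_of_lt_of_le hng (measure_mono (inter_subset_inter le_rfl
      (Ioc_subset_Ioc_right (le_max_right _ _))))
  have hall : ∀ m, max α₀ 1 ≤ m →
      0 < cellOp Q Qd lam lamd f m ∧ 0 < cellOp Q Qd lam lamd g m := by
    intro m hm
    have hm0 : 0 < m := lt_of_lt_of_le one_pos (le_trans (le_max_right _ _) hm)
    have hRm : R ≤ lam m := hα₀ m (le_trans (le_max_left _ _) hm)
    have ht : 0 < lam m := by
      have := hlammono hm0
      rw [hlam0] at this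
      exact lt_trans hmP this
    exact ⟨mul_pos (mul_pos (hlamd m) (hQd m hm0))
        (key Q hQmono f hf0 hfi R (lam m) hnf' hRm ht),
      mul_pos (mul_pos (hlamd m) (hQd m hm0))
        (key Q hQmono g hg0 hgi R (lam m) hng' hRm ht)⟩
  refine ⟨max α₀ 1, lt_of_lt_of_le one_pos (le_max_right _ _),
    Filter.Eventually.of_forall hall, ?_⟩
  have hsub : Ici (max α₀ 1) ⊆ Function.support (cellOp Q Qd lam lamd f) ∩
      Function.support (cellOp Q Qd lam lamd g) := by
    intro m hm
    exact ⟨(hall m hm).1.ne', (hall m hm).2.ne'⟩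
  calc (0:ENNReal) < volume (Ici (max α₀ 1)) := by simp [Real.volume_Ici]
    _ ≤ _ := measure_mono hsub
end

section
/- The stationary resting-phase density R(m) = (c/g₁(m)) e^{-Q(m)} ∫₀ᵐ e^{Q(x)} f*(x) dx, where f* satisfies Pf* = f*, solves the delay-type stationary equation (g₁ R)'(m) = -φ(m) R(m) + φ(λ(m)) λ'(m) R(λ(m)). -/
open MeasureTheory Real Set Filter

/-- the stationary resting-phase density
R(m) = (c/g₁(m)) e^{-Q(m)} ∫₀ᵐ e^{Q(x)} f*(x) dx, where Pf* = f*,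
solves (g₁R)'(m) = -φ(m)R(m) + φ(λ(m))λ'(m)R(λ(m)). -/
theorem stmt11 (m_P c : ℝ) (hc : 0 < c) (g₁ φ Q lam lamd f : ℝ → ℝ)
    (hgpos : ∀ m, 0 < g₁ m) (hgC : Continuous g₁) (hφC : Continuous φ)
    (hQ : ∀ m, HasDerivAt Q (φ m / g₁ m) m)
    (hlam : ∀ m, HasDerivAt lam (lamd m) m) (hlamd : ∀ m, 0 < lamd m)
    (hfC : Continuous f)
    (hfix : ∀ m, lamd m * (φ (lam m) / g₁ (lam m)) *
      (∫ y in (0:ℝ)..lam m, Real.exp (Q y - Q (lam m)) * f y) = f m)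
    (R : ℝ → ℝ)
    (hR : ∀ m, R m = c / g₁ m * Real.exp (-Q m) *
      ∫ x in (0:ℝ)..m, Real.exp (Q x) * f x) :
    ∀ m, HasDerivAt (fun x => g₁ x * R x)
      (-(φ m * R m) + φ (lam m) * lamd m * R (lam m)) m := by
  intro m
  have hQC : Continuous Q := by
    rw [continuous_iff_continuousAt]; exact fun x => (hQ x).continuousAt
  have hcont : Continuous (fun x => Real.exp (Q x) * f x) :=
    (hQC.rexp).mul hfC
  set F : ℝ → ℝ := fun t => ∫ x in (0:ℝ)..t, Real.exp (Q x) * f x with hF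
  have hFd : HasDerivAt F (Real.exp (Q m) * f m) m :=
    intervalIntegral.integral_hasDerivAt_right (hcont.intervalIntegrable 0 m)
      (hcont.stronglyMeasurableAtFilter _ _) hcont.continuousAt
  have hgR : ∀ x, g₁ x * R x = c * (Real.exp (-Q x) * F x) := by
    intro x
    rw [hR x]
    have hg := (hgpos x).ne'
    field_simp
    ring
  have hEd : HasDerivAt (fun x => Real.exp (-Q x)) (Real.exp (-Q m) * (-(φ m / g₁ m))) m := by
    have := ((hQ m).neg).exp
    simpa using this
  have hprod : HasDerivAt (fun x => c * (Real.exp (-Q x) * F x))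
      (c * (Real.exp (-Q m) * (-(φ m / g₁ m)) * F m + Real.exp (-Q m) * (Real.exp (Q m) * f m))) m :=
    ((hEd.mul hFd)).const_mul c
  have hkey : c * (Real.exp (-Q m) * (-(φ m / g₁ m)) * F m + Real.exp (-Q m) * (Real.exp (Q m) * f m))
      = -(φ m * R m) + φ (lam m) * lamd m * R (lam m) := by
    have h1 : Real.exp (-Q m) * Real.exp (Q m) = 1 := by
      rw [← Real.exp_add]; simp
    have h2 : c * f m = φ (lam m) * lamd m * R (lam m) := by
      rw [← hfix m, hR (lam m)]
      have hint : (∫ y in (0:ℝ)..lam m, Real.exp (Q y - Q (lam m)) * f y)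
          = Real.exp (-Q (lam m)) * F (lam m) := by
        rw [hF]
        rw [← intervalIntegral.integral_const_mul]
        congr 1
        ext y
        rw [← mul_assoc, ← Real.exp_add]
        ring_nf
      rw [hint]
      have hg := (hgpos (lam m)).ne'
      field_simp
      ring
    have h3 : φ m * R m = c * (φ m / g₁ m) * (Real.exp (-Q m) * F m) := by
      rw [hR m]
      have hg := (hgpos m).ne'
      field_simp
      ring
    rw [h3, ← h2]
    rw [mul_comm (Real.exp (-Q m)) (Real.exp (Q m))] at h1
    calc c * (Real.exp (-Q m) * (-(φ m / g₁ m)) * F m + Real.exp (-Q m) * (Real.exp (Q m) * f m))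
        = -(c * (φ m / g₁ m) * (Real.exp (-Q m) * F m)) + (Real.exp (Q m) * Real.exp (-Q m)) * (c * f m) := by ring
      _ = -(c * (φ m / g₁ m) * (Real.exp (-Q m) * F m)) + c * f m := by rw [h1]; ring
  have := hprod.congr_deriv hkey
  exact HasDerivAt.congr_of_eventuallyEq this (Filter.Eventually.of_forall fun x => (hgR x))
end

section
/- If a stochastic operator T on L¹(X,μ) has two distinct invariant densities f₁ and f₂, then g = (f₁-f₂)⁺/‖(f₁-f₂)⁺‖ is also an invariant density of T, and its support is a proper subset (up to measure zero) of supp f₁ ∪ supp f₂ with μ(supp f₂ \ supp g) > 0. -/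
open MeasureTheory Real Set Filter

/-- if a stochastic operator T on L¹(X,μ) has two distinct
invariant densities f₁, f₂, then g = (f₁-f₂)⁺/‖(f₁-f₂)⁺‖ is also an invariant
density, its support is (up to measure zero) a subset of supp f₁ ∪ supp f₂,
and μ(supp f₂ \ supp g) > 0. -/
theorem stmt15 {X : Type*} [MeasurableSpace X] (μ : Measure X) [SigmaFinite μ]
    (T : Lp ℝ 1 μ →ₗ[ℝ] Lp ℝ 1 μ)
    (hTpos : ∀ f : Lp ℝ 1 μ, 0 ≤ f → 0 ≤ T f)
    (hTint : ∀ f : Lp ℝ 1 μ, ∫ x, T f x ∂μ = ∫ x, f x ∂μ)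
    (f₁ f₂ : Lp ℝ 1 μ) (hne : f₁ ≠ f₂)
    (h₁ : 0 ≤ f₁) (h₂ : 0 ≤ f₂)
    (hi₁ : (∫ x, f₁ x ∂μ) = 1) (hi₂ : (∫ x, f₂ x ∂μ) = 1)
    (hf₁ : T f₁ = f₁) (hf₂ : T f₂ = f₂)
    (g : Lp ℝ 1 μ) (hg : g = ‖Lp.posPart (f₁ - f₂)‖⁻¹ • Lp.posPart (f₁ - f₂)) :
    0 ≤ g ∧ (∫ x, g x ∂μ) = 1 ∧ T g = g ∧
    μ (Function.support g \ (Function.support f₁ ∪ Function.support f₂)) = 0 ∧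
    0 < μ (Function.support f₂ \ Function.support g) := by
  set u : Lp ℝ 1 μ := f₁ - f₂ with hu
  set p : Lp ℝ 1 μ := Lp.posPart u with hp
  have hu_ae : ⇑u =ᵐ[μ] fun x => f₁ x - f₂ x := Lp.coeFn_sub f₁ f₂
  have hp_ae : ⇑p =ᵐ[μ] fun x => max (u x) 0 := Lp.coeFn_posPart u
  have hp_ae' : ⇑p =ᵐ[μ] fun x => max (f₁ x - f₂ x) 0 := by
    filter_upwards [hp_ae, hu_ae] with x h1 h2
    rw [h1, h2]
  have h₁ae : 0 ≤ᵐ[μ] ⇑f₁ := (Lp.coeFn_nonneg f₁).2 h₁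
  have h₂ae : 0 ≤ᵐ[μ] ⇑f₂ := (Lp.coeFn_nonneg f₂).2 h₂
  have hp_nonneg : 0 ≤ p := by
    rw [← Lp.coeFn_nonneg]
    filter_upwards [hp_ae] with x hx
    simp only [hx, Pi.zero_apply]
    exact le_max_right _ _
  have hp_int : Integrable (⇑p) μ := L1.integrable_coeFn p
  have hu_int : Integrable (⇑u) μ := L1.integrable_coeFn u
  have hp_ge : ∀ᵐ x ∂μ, 0 ≤ p x := by
    filter_upwards [hp_ae] with x hx; rw [hx]; exact le_max_right _ _
  -- ‖p‖ = ∫ p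
  have hnorm : ‖p‖ = ∫ x, p x ∂μ := by
    rw [L1.norm_eq_integral_norm]
    refine integral_congr_ae ?_
    filter_upwards [hp_ge] with x hx
    exact Real.norm_of_nonneg hx
  -- p ≠ 0
  have hpne : p ≠ 0 := by
    intro h0
    apply hne
    have hle : ∀ᵐ x ∂μ, f₁ x ≤ f₂ x := by
      have : ⇑p =ᵐ[μ] 0 := by rw [h0]; exact Lp.coeFn_zero _ _ _
      filter_upwards [hp_ae', this] with x hx h0x
      have : max (f₁ x - f₂ x) 0 = 0 := by rw [← hx, h0x]; rfl
      have := le_max_left (f₁ x - f₂ x) 0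
      linarith [this.trans_eq ‹max (f₁ x - f₂ x) 0 = 0›]
    have hdi : Integrable (fun x => f₂ x - f₁ x) μ :=
      (L1.integrable_coeFn f₂).sub (L1.integrable_coeFn f₁)
    have hz : ∫ x, (f₂ x - f₁ x) ∂μ = 0 := by
      rw [integral_sub (L1.integrable_coeFn f₂) (L1.integrable_coeFn f₁), hi₁, hi₂]; ring
    have := (integral_eq_zero_iff_of_nonneg_ae
      (by filter_upwards [hle] with x hx; simpa using sub_nonneg.2 hx) hdi).1 hz
    refine Lp.ext ?_
    filter_upwards [this] with x hx
    have : f₂ x - f₁ x = 0 := hx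
    linarith
  have hnormpos : 0 < ‖p‖ := norm_pos_iff.2 hpne
  -- ∫ u = 0
  have hiu : ∫ x, u x ∂μ = 0 := by
    rw [integral_congr_ae hu_ae,
      integral_sub (L1.integrable_coeFn f₁) (L1.integrable_coeFn f₂), hi₁, hi₂]; ring
  -- T u = u
  have hTu : T u = u := by rw [hu, map_sub, hf₁, hf₂]
  -- T p = p
  have hTp : T p = p := by
    have hpu : 0 ≤ p - u := by
      rw [← Lp.coeFn_nonneg]
      filter_upwards [Lp.coeFn_sub p u, hp_ae] with x hx h1
      simp only [hx, Pi.sub_apply, Pi.zero_apply, h1]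
      simp [le_max_iff]
    have h1 : 0 ≤ T p - u := by
      have := hTpos _ hpu
      rwa [map_sub, hTu] at this
    have h2 : 0 ≤ T p := hTpos p hp_nonneg
    have hge : ∀ᵐ x ∂μ, p x ≤ (T p) x := by
      have h1' := (Lp.coeFn_nonneg (T p - u)).2 h1
      have h2' := (Lp.coeFn_nonneg (T p)).2 h2
      filter_upwards [h1', h2', Lp.coeFn_sub (T p) u, hp_ae] with x a b c d
      have : 0 ≤ (T p) x - u x := by
        have := a; rw [c] at this; simpa using this
      rw [d]
      simp only [max_le_iff]
      constructor
      · linarith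
      · simpa using b
    have hintq : ∫ x, ((T p) x - p x) ∂μ = 0 := by
      rw [integral_sub (L1.integrable_coeFn (T p)) hp_int, hTint]; ring
    have hq0 : (fun x => (T p) x - p x) =ᵐ[μ] 0 :=
      (integral_eq_zero_iff_of_nonneg_ae
        (by filter_upwards [hge] with x hx; simpa using sub_nonneg.2 hx)
        ((L1.integrable_coeFn (T p)).sub hp_int)).1 hintq
    refine Lp.ext ?_
    filter_upwards [hq0] with x hx
    have : (T p) x - p x = 0 := hx
    linarith
  -- g coe
  have hg_ae : ⇑g =ᵐ[μ] fun x => ‖p‖⁻¹ * max (f₁ x - f₂ x) 0 := by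
    rw [hg]
    filter_upwards [Lp.coeFn_smul (‖p‖⁻¹) p, hp_ae'] with x hx h1
    rw [hx]
    simp [h1]
  -- 0 ≤ g
  have hg_nonneg : 0 ≤ g := by
    rw [← Lp.coeFn_nonneg]
    filter_upwards [hg_ae] with x hx
    simp only [hx, Pi.zero_apply]
    positivity
  refine ⟨hg_nonneg, ?_, ?_, ?_, ?_⟩
  · -- ∫ g = 1
    have : ∫ x, g x ∂μ = ‖p‖⁻¹ * ∫ x, p x ∂μ := by
      rw [hg]
      rw [integral_congr_ae (Lp.coeFn_smul (‖p‖⁻¹) p)]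
      exact integral_const_mul _ _
    rw [this, ← hnorm, inv_mul_cancel₀ (ne_of_gt hnormpos)]
  · rw [hg, T.map_smul, hTp]
  · -- support g ⊆ supp f₁ ∪ supp f₂ a.e.
    rw [measure_eq_zero_iff_ae_notMem]
    filter_upwards [hg_ae] with x hx
    intro hmem
    obtain ⟨hgx, hnot⟩ := hmem
    simp only [Set.mem_union, Function.mem_support, not_or, not_not] at hnot
    obtain ⟨h1x, h2x⟩ := hnot
    exact hgx (by rw [hx, h1x, h2x]; simp)
  · -- 0 < μ (supp f₂ \ supp g)
    rw [pos_iff_ne_zero]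
    intro hμ0
    have hae : ∀ᵐ x ∂μ, x ∉ Function.support f₂ \ Function.support g :=
      measure_eq_zero_iff_ae_notMem.1 hμ0
    have key : ∀ᵐ x ∂μ, max (f₁ x - f₂ x) 0 = f₁ x - f₂ x := by
      filter_upwards [hae, hg_ae, h₁ae, h₂ae] with x hx hgx h1x h2x
      by_cases h2 : f₂ x = 0
      · rw [h2, sub_zero]
        exact max_eq_left (h1x)
      · have hgne : g x ≠ 0 := by
          intro h
          exact hx ⟨Function.mem_support.2 h2, fun hs => Function.mem_support.1 hs h⟩
        have hmne : max (f₁ x - f₂ x) 0 ≠ 0 := by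
          intro h; apply hgne; rw [hgx, h, mul_zero]
        have : 0 < f₁ x - f₂ x := by
          rcases lt_or_ge 0 (f₁ x - f₂ x) with h | h
          · exact h
          · exact absurd (max_eq_right h) hmne
        exact max_eq_left this.le
    have : ∫ x, p x ∂μ = 0 := by
      rw [integral_congr_ae (hp_ae'.trans key), ← hiu]
      exact (integral_congr_ae hu_ae).symm
    rw [hnorm, this] at hnormpos
    exact lt_irrefl 0 hnormpos
end

section
/- For a stochastic operator T on L¹(X,μ): if f₁, f₂ are invariant densities, then T(f₁-f₂)⁺ = (f₁-f₂)⁺ and T(f₁-f₂)⁻ = (f₁-f₂)⁻. -/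
open MeasureTheory Real Set Filter

/-- for a stochastic operator T on L¹(X,μ), if f₁, f₂ are
invariant densities then T(f₁-f₂)⁺ = (f₁-f₂)⁺ and T(f₁-f₂)⁻ = (f₁-f₂)⁻. -/
theorem stmt16 {X : Type*} [MeasurableSpace X] (μ : Measure X) [SigmaFinite μ]
    (T : Lp ℝ 1 μ →ₗ[ℝ] Lp ℝ 1 μ)
    (hTpos : ∀ f : Lp ℝ 1 μ, 0 ≤ f → 0 ≤ T f)
    (hTint : ∀ f : Lp ℝ 1 μ, ∫ x, T f x ∂μ = ∫ x, f x ∂μ)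
    (f₁ f₂ : Lp ℝ 1 μ) (h₁ : 0 ≤ f₁) (h₂ : 0 ≤ f₂)
    (hi₁ : (∫ x, f₁ x ∂μ) = 1) (hi₂ : (∫ x, f₂ x ∂μ) = 1)
    (hf₁ : T f₁ = f₁) (hf₂ : T f₂ = f₂) :
    T (Lp.posPart (f₁ - f₂)) = Lp.posPart (f₁ - f₂) ∧
    T (Lp.negPart (f₁ - f₂)) = Lp.negPart (f₁ - f₂) := by
  set g := f₁ - f₂ with hgdef
  have hTg : T g = g := by rw [hgdef, map_sub, hf₁, hf₂]
  -- posPart g ≥ 0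
  have hp0 : (0 : Lp ℝ 1 μ) ≤ Lp.posPart g := by
    rw [← Lp.coeFn_nonneg]
    filter_upwards [Lp.coeFn_posPart g] with x hx
    simp [hx]
  -- posPart g - g ≥ 0
  have hpg : (0 : Lp ℝ 1 μ) ≤ Lp.posPart g - g := by
    rw [← Lp.coeFn_nonneg]
    filter_upwards [Lp.coeFn_posPart g, Lp.coeFn_sub (Lp.posPart g) g] with x hx hx'
    simp only [Pi.zero_apply, hx', Pi.sub_apply, hx]
    simp [le_max_iff]
  -- T (posPart g) ≥ posPart g
  have hge : Lp.posPart g ≤ T (Lp.posPart g) := by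
    have h1 : (0 : Lp ℝ 1 μ) ≤ T (Lp.posPart g) - g := by
      have := hTpos _ hpg
      rwa [map_sub, hTg] at this
    have h2 := hTpos _ hp0
    rw [← Lp.coeFn_le]
    rw [← Lp.coeFn_nonneg] at h1 h2
    filter_upwards [Lp.coeFn_posPart g, Lp.coeFn_sub (T (Lp.posPart g)) g, h1, h2]
      with x hx hx' h1x h2x
    rw [Pi.zero_apply, hx', Pi.sub_apply, sub_nonneg] at h1x
    rw [Pi.zero_apply] at h2x
    rw [hx]
    exact max_le h1x h2x
  -- difference has zero integral
  have hd0 : T (Lp.posPart g) - Lp.posPart g = 0 := by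
    rw [Lp.eq_zero_iff_ae_eq_zero]
    have hnn : (0 : X → ℝ) ≤ᵐ[μ] ⇑(T (Lp.posPart g) - Lp.posPart g) := by
      rw [Lp.coeFn_nonneg]
      exact sub_nonneg.mpr hge
    have hint : ∫ x, (T (Lp.posPart g) - Lp.posPart g) x ∂μ = 0 := by
      have := integral_congr_ae (Lp.coeFn_sub (T (Lp.posPart g)) (Lp.posPart g))
      rw [this]
      simp only [Pi.sub_apply]
      rw [integral_sub (L1.integrable_coeFn _) (L1.integrable_coeFn _),
        hTint, sub_self]
    have := (integral_eq_zero_iff_of_nonneg_ae hnn (L1.integrable_coeFn _)).mp hint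
    exact this
  have hTpospart : T (Lp.posPart g) = Lp.posPart g := by
    have := sub_eq_zero.mp hd0
    exact this
  refine ⟨hTpospart, ?_⟩
  -- negPart g = posPart g - g
  have hneg : Lp.negPart g = Lp.posPart g - g := by
    rw [← sub_eq_zero, Lp.eq_zero_iff_ae_eq_zero]
    filter_upwards [Lp.coeFn_negPart g, Lp.coeFn_posPart g,
      Lp.coeFn_sub (Lp.negPart g) (Lp.posPart g - g),
      Lp.coeFn_sub (Lp.posPart g) g] with x h1 h2 h3 h4
    rw [h3, Pi.sub_apply, h1, h4, Pi.sub_apply, h2, Pi.zero_apply]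
    rcases le_total (g x) 0 with h | h
    · rw [min_eq_left h, max_eq_right h]; ring
    · rw [min_eq_right h, max_eq_left h]; ring
  rw [hneg, map_sub, hTpospart, hTg]
end
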